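/- If κ ≤ λ are regular cardinals, then κ ◁ (λ^{<κ})⁺, where λ^{<κ} denotes the cardinality of [λ]^{<κ} and ⁺ denotes cardinal successor. -/

import Mathlib

universe u

open Cardinal

lemma sharply_aux_mono {κ : Cardinal.{u}} {A B : Type u} (h : #A ≤ #B) :
    #{s : Set A // #s < κ} ≤ #{s : Set B // #s < κ} := by
  obtain ⟨f⟩ := h
  refine ⟨⟨fun s => ⟨f '' s.1, by rw [mk_image_eq f.injective]; exact s.2⟩, ?_⟩⟩
  intro s t hst
  have h1 : f '' s.1 = f '' t.1 := congrArg Subtype.val hst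
  exact Subtype.ext (Set.image_injective.mpr f.injective h1)

/-- `κ` is sharply less than `κ'` (`κ ◁ κ'`): `κ < κ'` and for every set `A` of cardinality
less than `κ'`, the poset `[A]^{<κ}` of subsets of `A` of cardinality less than `κ`, ordered
by inclusion, has a cofinal subset of cardinality less than `κ'`. -/
def SharplyLess (κ κ' : Cardinal.{u}) : Prop :=
  κ < κ' ∧ ∀ (A : Type u), #A < κ' →
    ∃ T : Set {s : Set A // #s < κ}, #T < κ' ∧
      ∀ s : {s : Set A // #s < κ}, ∃ t ∈ T, s.1 ⊆ t.1

/-- If `κ ≤ lam` are regular cardinals then `κ ◁ (lam^{<κ})⁺`, where `lam^{<κ}` is the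
cardinality of the set `[lam]^{<κ}` of subsets of (a set of cardinality) `lam` of cardinality
less than `κ`, and `⁺` is cardinal successor. -/
theorem sharplyLess_succ_powerlt {κ lam : Cardinal.{u}}
    (hκ : κ.IsRegular) (hlam : lam.IsRegular) (hκlam : κ ≤ lam) :
    SharplyLess κ (Order.succ (#{s : Set lam.out // #s < κ})) := by
  classical
  set μ := #{s : Set lam.out // #s < κ} with hμdef
  have hκ0 : ℵ₀ ≤ κ := hκ.aleph0_le
  have hlamμ : lam ≤ μ := by
    conv_lhs => rw [← mk_out lam]
    refine ⟨⟨fun x => ⟨{x}, by rw [mk_singleton]; exact one_lt_aleph0.trans_le hκ0⟩, ?_⟩⟩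
    intro a b h
    have : ({a} : Set lam.out) = {b} := congrArg Subtype.val h
    simpa [Set.singleton_eq_singleton_iff] using this
  have hκμ : κ ≤ μ := hκlam.trans hlamμ
  have hμ0 : ℵ₀ ≤ μ := hκ0.trans hκμ
  -- `lam ^ c ≤ μ` for `c < κ`
  have hpow : ∀ c < κ, lam ^ c ≤ μ := by
    intro c hc
    conv_lhs => rw [← mk_out lam, ← mk_out c, power_def]
    have step1 : #(c.out → lam.out) ≤ #{s : Set (c.out × lam.out) // #s < κ} := by
      refine ⟨⟨fun f => ⟨Set.range (fun i => (i, f i)), ?_⟩, ?_⟩⟩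
      · exact mk_range_le.trans_lt (by rw [mk_out]; exact hc)
      · intro f g h
        have h1 : Set.range (fun i => (i, f i)) = Set.range (fun i => (i, g i)) :=
          congrArg Subtype.val h
        funext i
        have : (i, f i) ∈ Set.range (fun i => (i, g i)) := by
          rw [← h1]; exact ⟨i, rfl⟩
        obtain ⟨j, hj⟩ := this
        rw [Prod.ext_iff] at hj
        obtain ⟨rfl, h3⟩ := hj
        exact h3.symm
    refine step1.trans (sharply_aux_mono ?_)
    rw [mk_prod, lift_id, lift_id, mk_out, mk_out]
    calc c * lam ≤ lam * lam := by
          exact mul_le_mul_left (hc.le.trans hκlam) lam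
      _ = lam := mul_eq_self hlam.aleph0_le
  -- `μ ^ ν ≤ μ` for `ν < κ`
  have hμpow : ∀ ν < κ, μ ^ ν ≤ μ := by
    intro ν hν
    rw [hμdef, ← mk_out ν, power_def]
    have step1 : #(ν.out → {s : Set lam.out // #s < κ}) ≤
        #(Σ u : {s : Set lam.out // #s < κ}, (ν.out → Set u.1)) := by
      set F : (ν.out → {s : Set lam.out // #s < κ}) →
          Σ u : {s : Set lam.out // #s < κ}, (ν.out → Set u.1) :=
        fun f => ⟨⟨⋃ i, (f i).1, by
          rw [card_iUnion_lt_iff_forall_of_isRegular hκ (by rw [mk_out]; exact hν)]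
          exact fun i => (f i).2⟩, fun i => Subtype.val ⁻¹' (f i).1⟩ with hF
      have key : ∀ (f : ν.out → {s : Set lam.out // #s < κ}) (i : ν.out),
          Subtype.val '' ((F f).2 i) = (f i).1 := by
        intro f i
        apply Set.image_preimage_eq_of_subset
        rw [Subtype.range_coe]
        exact Set.subset_iUnion (fun j => (f j).1) i
      refine ⟨⟨F, ?_⟩⟩
      intro f g h
      funext i
      apply Subtype.ext
      rw [← key f i, ← key g i, h]
    refine step1.trans ?_
    rw [mk_sigma]
    have h2lam : (2 : Cardinal) ≤ lam := by
      refine le_trans ?_ hlam.aleph0_le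
      exact_mod_cast (nat_lt_aleph0 2).le
    calc (sum fun u : {s : Set lam.out // #s < κ} => #(ν.out → Set u.1))
        ≤ sum fun _ : {s : Set lam.out // #s < κ} => μ := by
          apply sum_le_sum
          intro u
          have e1 : #(ν.out → Set u.1) = (2 ^ #u.1) ^ ν := by
            rw [← power_def, mk_set, mk_out]
          rw [e1, ← power_mul]
          refine le_trans (power_le_power_right h2lam) ?_
          exact hpow _ (mul_lt_of_lt hκ0 u.2 hν)
      _ = μ * μ := by rw [sum_const', ← hμdef]
      _ ≤ μ := (mul_eq_self hμ0).le
  -- the small subsets of a set of size `μ` number at most `μ`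
  have hSμ : #{s : Set μ.out // #s < κ} ≤ μ := by
    set F : ((Σ i : κ.ord.ToType, (Set.Iio i → μ.out)) ⊕ PUnit.{u+1}) →
        {s : Set μ.out // #s < κ} :=
      fun x => x.elim
        (fun p => ⟨Set.range p.2, mk_range_le.trans_lt (mk_Iio_ord_toType p.1)⟩)
        (fun _ => ⟨∅, by rw [mk_emptyCollection]; exact aleph0_pos.trans_le hκ0⟩) with hF
    letI : IsWellOrder κ.ord.ToType (· < ·) := isWellOrder_lt
    have hsur : Function.Surjective F := by
      intro s
      rcases eq_or_ne s.1 ∅ with he | he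
      · exact ⟨Sum.inr PUnit.unit, Subtype.ext he.symm⟩
      · have hlt : (#s.1).ord <
            Ordinal.type ((· < ·) : κ.ord.ToType → κ.ord.ToType → Prop) := by
          rw [Ordinal.type_toType]
          exact Cardinal.ord_lt_ord.2 s.2
        obtain ⟨i, hi⟩ := Ordinal.typein_surj ((· < ·) : κ.ord.ToType → κ.ord.ToType → Prop) hlt
        have hcard : #(Set.Iio i) = #s.1 := by
          have h4 : (Ordinal.typein ((· < ·) : κ.ord.ToType → κ.ord.ToType → Prop) i).card
              = #s.1 := by rw [hi, card_ord]
          rw [← h4]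
          rfl
        obtain ⟨e⟩ := Cardinal.eq.1 hcard
        refine ⟨Sum.inl ⟨i, fun j => (e j).1⟩, ?_⟩
        apply Subtype.ext
        show Set.range (fun j : Set.Iio i => ((e j : s.1) : μ.out)) = s.1
        rw [show (fun j : Set.Iio i => ((e j : s.1) : μ.out)) = Subtype.val ∘ e from rfl,
          Set.range_comp, Equiv.range_eq_univ, Set.image_univ, Subtype.range_coe]
    refine (mk_le_of_surjective hsur).trans ?_
    rw [mk_sum, mk_sigma, lift_id, lift_id, mk_punit]
    have hsum : (sum fun i : κ.ord.ToType => #(Set.Iio i → μ.out)) ≤ κ * μ := by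
      calc (sum fun i : κ.ord.ToType => #(Set.Iio i → μ.out))
          ≤ sum fun _ : κ.ord.ToType => μ := by
            apply sum_le_sum
            intro i
            have e1 : #(Set.Iio i → μ.out) = μ ^ #(Set.Iio i) := by
              rw [← power_def, mk_out]
            rw [e1]
            exact hμpow _ (mk_Iio_ord_toType i)
        _ = κ * μ := by rw [sum_const', mk_ord_toType]
    calc (sum fun i : κ.ord.ToType => #(Set.Iio i → μ.out)) + 1 ≤ κ * μ + 1 :=
          add_le_add_left hsum 1
      _ = μ + 1 := by rw [mul_eq_max hκ0 hμ0, max_eq_right hκμ]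
      _ = μ := by rw [add_one_eq hμ0]
  constructor
  · exact hκμ.trans_lt (Order.lt_succ μ)
  · intro A hA
    refine ⟨Set.univ, ?_, fun s => ⟨s, Set.mem_univ _, subset_rfl⟩⟩
    rw [mk_univ]
    rw [Order.lt_succ_iff] at hA ⊢
    exact (sharply_aux_mono (B := μ.out) (by rw [mk_out]; exact hA)).trans hSμ
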